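/- Under the assumptions 0 < p ≤ τ·α < β < 1/2, 0 < α < 1, 0 < τ < 1/2, and α + β < 1, the inequality T + (p/α)·((1-τ)·α/(1 - τ·α + p) + ((β + p)/(1 - τ·α + p) - T)·(τ·α/(β + τ·α))) > (p/α)·((1-τ)·α/(1 - τ·α) + (β/(1 - τ·α))·(τ·α/(β + τ·α))) holds whenever T > ((β + τ·α)/(β + τ·α - p·τ)) · (1/((1 - τ·α)(1 - τ·α + p))) · (p/α) · (p·(1-τ)·α + (τ·α/(β + τ·α))·(p·β - p·(1 - τ·α))). -/

import Mathlib

theorem stmt5 (p α β τ T : ℝ)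
    (h1 : 0 < p) (h2 : p ≤ τ * α) (h3 : τ * α < β) (h4 : β < 1/2)
    (h5 : 0 < α) (h5' : α < 1) (h6 : 0 < τ) (h6' : τ < 1/2) (h7 : α + β < 1)
    (hT : T > ((β + τ * α) / (β + τ * α - p * τ)) *
      (1 / ((1 - τ * α) * (1 - τ * α + p))) * (p / α) *
      (p * (1 - τ) * α + (τ * α / (β + τ * α)) * (p * β - p * (1 - τ * α)))) :
    T + (p / α) * ((1 - τ) * α / (1 - τ * α + p) +
        ((β + p) / (1 - τ * α + p) - T) * (τ * α / (β + τ * α))) >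
      (p / α) * ((1 - τ) * α / (1 - τ * α) +
        (β / (1 - τ * α)) * (τ * α / (β + τ * α))) := by
  have hA : 0 < 1 - τ * α := by nlinarith
  have hB : 0 < 1 - τ * α + p := by linarith
  have hC : 0 < β + τ * α := by nlinarith
  have hD : 0 < β + τ * α - p * τ := by nlinarith
  have key : ((β + τ * α) / (β + τ * α - p * τ)) *
      (1 / ((1 - τ * α) * (1 - τ * α + p))) * (p / α) *
      (p * (1 - τ) * α + (τ * α / (β + τ * α)) * (p * β - p * (1 - τ * α)))
      * ((β + τ * α - p * τ) / (β + τ * α))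
      < T * ((β + τ * α - p * τ) / (β + τ * α)) :=
    mul_lt_mul_of_pos_right hT (div_pos hD hC)
  rw [gt_iff_lt, ← sub_pos]
  have heq : T + (p / α) * ((1 - τ) * α / (1 - τ * α + p) +
        ((β + p) / (1 - τ * α + p) - T) * (τ * α / (β + τ * α))) -
      (p / α) * ((1 - τ) * α / (1 - τ * α) +
        (β / (1 - τ * α)) * (τ * α / (β + τ * α)))
      = T * ((β + τ * α - p * τ) / (β + τ * α))
        - ((β + τ * α) / (β + τ * α - p * τ)) *
      (1 / ((1 - τ * α) * (1 - τ * α + p))) * (p / α) *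
      (p * (1 - τ) * α + (τ * α / (β + τ * α)) * (p * β - p * (1 - τ * α)))
      * ((β + τ * α - p * τ) / (β + τ * α)) := by
    field_simp [show 1 - α * τ ≠ 0 by rw [mul_comm]; exact hA.ne',
      show 1 - α * τ + p ≠ 0 by rw [mul_comm]; exact hB.ne',
      show β + α * τ ≠ 0 by rw [mul_comm]; exact hC.ne',
      show β + α * τ - p * τ ≠ 0 by rw [mul_comm α]; exact hD.ne',
      show β + α * τ - τ * p ≠ 0 by rw [mul_comm α, mul_comm τ p]; exact hD.ne']
    ring
  rw [heq]
  linarith
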